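/- arXiv:1902.04739 — 3 statements merged into one kernel-verified Lean document; each statement's English description precedes it below -/
import Mathlib

section
/- Let N ≥ 1 and let α₁, β₁, γ₁, ρ₁ ∈ [1, ∞) satisfy α₁ ≤ ρ₁ ≤ β₁ and 1/α₁ + 1/β₁ + 1/γ₁ = 1 + 1/ρ₁. Let k : ℝ^N × ℝ^N → ℝ be measurable with A := (∫ (∫ |k(x,y)|^{α₁} dy)^{β₁/α₁} dx)^{1/β₁} < ∞ and B := (∫ (∫ |k(x,y)|^{α₁} dx)^{β₁/α₁} dy)^{1/β₁} < ∞. Then for every measurable f : ℝ^N → ℝ with finite L^{γ₁} norm, the function x ↦ ∫_{ℝ^N} |k(x,y)| |f(y)| dy has L^{ρ₁} norm at most max(A, B) · ‖f‖_{L^{γ₁}}. -/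
open MeasureTheory Real
open scoped ENNReal BigOperators

/-- Minkowski's integral inequality for `ℝ≥0∞`-valued functions. -/
theorem my_minkowski_lintegral {X Y : Type*} [MeasurableSpace X] [MeasurableSpace Y]
    (μ : Measure X) (ν : Measure Y) [SigmaFinite μ] [SFinite ν]
    {h : X → Y → ℝ≥0∞} (hm : Measurable fun q : X × Y => h q.1 q.2)
    {p : ℝ} (hp : 1 ≤ p) :
    (∫⁻ x, (∫⁻ y, h x y ∂ν) ^ p ∂μ) ^ (1 / p) ≤
      ∫⁻ y, (∫⁻ x, h x y ^ p ∂μ) ^ (1 / p) ∂ν := by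
  rcases eq_or_lt_of_le hp with hp1 | hp1
  · rw [← hp1]
    simp only [one_div_one, ENNReal.rpow_one]
    exact le_of_eq (lintegral_lintegral_swap hm.aemeasurable)
  have hp0 : (0:ℝ) < p := lt_trans one_pos hp1
  set q : ℝ := p / (p - 1) with hq
  have hpq : p.HolderConjugate q := Real.HolderConjugate.conjExponent hp1
  have hq0 : (0:ℝ) < q := hpq.symm.pos
  set S : X → ℝ≥0∞ := fun x => ∫⁻ y, h x y ∂ν with hSdef
  have hSm : Measurable S := hm.lintegral_prod_right'
  set E : ℕ → Set X := spanningSets μ with hE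
  set g : ℕ → X → ℝ≥0∞ := fun n x => min (S x) n with hg
  have hgm : ∀ n, Measurable (g n) := fun n => hSm.min measurable_const
  set R : ℝ≥0∞ := ∫⁻ y, (∫⁻ x, h x y ^ p ∂μ) ^ (1 / p) ∂ν with hR
  have key : ∀ n, ∫⁻ x in E n, g n x ^ p ∂μ ≤ R ^ p := by
    intro n
    set In : ℝ≥0∞ := ∫⁻ x in E n, g n x ^ p ∂μ with hIn
    have hIn_top : In ≠ ⊤ := by
      have : In ≤ (n : ℝ≥0∞) ^ p * μ (E n) := by
        rw [hIn, ← setLIntegral_const (E n) ((n : ℝ≥0∞) ^ p)]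
        exact lintegral_mono fun x => ENNReal.rpow_le_rpow (min_le_right _ _) hp0.le
      exact ne_top_of_le_ne_top
        (ENNReal.mul_ne_top (ENNReal.rpow_ne_top_of_nonneg hp0.le (ENNReal.natCast_ne_top n))
          (measure_spanningSets_lt_top μ n).ne) this
    rcases eq_or_ne R ⊤ with hRt | hRt
    · rw [hRt, ENNReal.top_rpow_of_pos hp0]; exact le_top
    rcases eq_or_ne In 0 with hIn0 | hIn0
    · rw [hIn0]; exact zero_le
    have step : In ≤ R * In ^ (1 / q) := by
      calc In ≤ ∫⁻ x in E n, g n x ^ (p - 1) * S x ∂μ := by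
            refine lintegral_mono fun x => ?_
            have e1 : g n x ^ p = g n x ^ (p - 1) * g n x ^ (1:ℝ) := by
              rw [← ENNReal.rpow_add_of_nonneg _ _ (by linarith) zero_le_one]
              norm_num
            rw [e1, ENNReal.rpow_one]
            exact mul_le_mul_right (min_le_left _ _) _
        _ = ∫⁻ x in E n, ∫⁻ y, g n x ^ (p - 1) * h x y ∂ν ∂μ := by
            refine lintegral_congr fun x => ?_
            exact (lintegral_const_mul (g n x ^ (p - 1))
              (show Measurable fun y => h x y from hm.comp measurable_prodMk_left)).symm
        _ = ∫⁻ y, ∫⁻ x in E n, g n x ^ (p - 1) * h x y ∂μ ∂ν := by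
            exact lintegral_lintegral_swap
              ((((hgm n).pow_const _).comp measurable_fst).mul hm).aemeasurable
        _ ≤ ∫⁻ y, (∫⁻ x in E n, h x y ^ p ∂μ) ^ (1 / p) * In ^ (1 / q) ∂ν := by
            refine lintegral_mono fun y => ?_
            have hHold := ENNReal.lintegral_mul_le_Lp_mul_Lq (μ.restrict (E n)) hpq
              (f := fun x => h x y) (g := fun x => g n x ^ (p - 1))
              (show Measurable fun x => h x y from hm.comp measurable_prodMk_right).aemeasurable
              ((hgm n).pow_const (p - 1)).aemeasurable
            simp only [Pi.mul_apply] at hHold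
            calc ∫⁻ x in E n, g n x ^ (p - 1) * h x y ∂μ
                = ∫⁻ x in E n, h x y * g n x ^ (p - 1) ∂μ := by
                  simp_rw [mul_comm]
              _ ≤ (∫⁻ x in E n, h x y ^ p ∂μ) ^ (1 / p) *
                  (∫⁻ x in E n, (g n x ^ (p - 1)) ^ q ∂μ) ^ (1 / q) := hHold
              _ = (∫⁻ x in E n, h x y ^ p ∂μ) ^ (1 / p) * In ^ (1 / q) := by
                  congr 2
                  refine lintegral_congr fun x => ?_
                  rw [← ENNReal.rpow_mul, hpq.sub_one_mul_conj]
        _ = (∫⁻ y, (∫⁻ x in E n, h x y ^ p ∂μ) ^ (1 / p) ∂ν) * In ^ (1 / q) := by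
            rw [lintegral_mul_const' _ _
              (ENNReal.rpow_ne_top_of_nonneg (by positivity) hIn_top)]
        _ ≤ R * In ^ (1 / q) := by
            refine mul_le_mul_left (lintegral_mono fun y => ?_) _
            exact ENNReal.rpow_le_rpow
              (lintegral_mono' Measure.restrict_le_self le_rfl) (by positivity)
    have hIq0 : In ^ (1 / q) ≠ 0 := by
      simp [ENNReal.rpow_eq_zero_iff, hIn0, hIn_top]
    have hIqt : In ^ (1 / q) ≠ ⊤ := ENNReal.rpow_ne_top_of_nonneg (by positivity) hIn_top
    have hsplit : In = In ^ (1 / p) * In ^ (1 / q) := by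
      rw [← ENNReal.rpow_add_of_nonneg _ _ (by positivity) (by positivity)]
      rw [one_div, one_div, hpq.inv_add_inv_eq_one, ENNReal.rpow_one]
    have step2 : In ^ (1 / p) * In ^ (1 / q) ≤ R * In ^ (1 / q) :=
      le_trans (le_of_eq hsplit.symm) step
    have hfin : In ^ (1 / p) ≤ R := (ENNReal.mul_le_mul_iff_left hIq0 hIqt).mp step2
    calc In = (In ^ (1 / p)) ^ p := by
          rw [← ENNReal.rpow_mul, one_div, inv_mul_cancel₀ hp0.ne', ENNReal.rpow_one]
      _ ≤ R ^ p := ENNReal.rpow_le_rpow hfin hp0.le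
  set fn : ℕ → X → ℝ≥0∞ := fun n => (E n).indicator fun x => g n x ^ p with hfn
  have hfn_m : ∀ n, Measurable (fn n) :=
    fun n => ((hgm n).pow_const _).indicator (measurableSet_spanningSets μ n)
  have hfn_mono : Monotone fn := by
    intro m n hmn x
    by_cases hx : x ∈ E m
    · rw [hfn]; simp only
      rw [Set.indicator_of_mem hx, Set.indicator_of_mem (monotone_spanningSets μ hmn hx)]
      exact ENNReal.rpow_le_rpow (min_le_min le_rfl (Nat.cast_le.2 hmn)) hp0.le
    · rw [hfn]; simp only
      rw [Set.indicator_of_notMem hx]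
      exact zero_le
  have hpt : ∀ x, S x ^ p ≤ ⨆ n, fn n x := by
    intro x
    obtain ⟨n₀, hn₀⟩ : ∃ n, x ∈ E n := by
      have := iUnion_spanningSets μ
      have hx : x ∈ ⋃ i, spanningSets μ i := this ▸ Set.mem_univ x
      exact Set.mem_iUnion.mp hx
    rcases eq_or_ne (S x) ⊤ with hSx | hSx
    · rw [hSx, ENNReal.top_rpow_of_pos hp0]
      rw [top_le_iff, ← top_le_iff]
      have : ∀ m : ℕ, (m : ℝ≥0∞) ≤ ⨆ n, fn n x := by
        intro m
        set n := max (m + 1) n₀ with hn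
        have hxE : x ∈ E n := monotone_spanningSets μ (le_max_right _ _) hn₀
        have h1n : (1:ℝ≥0∞) ≤ (n:ℝ≥0∞) := by
          exact_mod_cast Nat.one_le_iff_ne_zero.2 (by positivity)
        have : fn n x = (n : ℝ≥0∞) ^ p := by
          rw [hfn]; simp only
          rw [Set.indicator_of_mem hxE, hg]; simp only
          rw [hSx, min_eq_right le_top]
        calc (m : ℝ≥0∞) ≤ (n : ℝ≥0∞) := by exact_mod_cast le_trans (Nat.le_succ m) (le_max_left _ _)
          _ = (n : ℝ≥0∞) ^ (1:ℝ) := (ENNReal.rpow_one _).symm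
          _ ≤ (n : ℝ≥0∞) ^ p := ENNReal.rpow_le_rpow_of_exponent_le h1n hp
          _ = fn n x := this.symm
          _ ≤ ⨆ n, fn n x := le_iSup (fun n => fn n x) n
      calc (⊤:ℝ≥0∞) = ⨆ m : ℕ, (m : ℝ≥0∞) := (ENNReal.iSup_natCast).symm
        _ ≤ ⨆ n, fn n x := iSup_le this
    · obtain ⟨n₁, hn₁⟩ := ENNReal.exists_nat_gt hSx
      set n := max n₀ n₁ with hn
      have hxE : x ∈ E n := monotone_spanningSets μ (le_max_left _ _) hn₀
      have : fn n x = S x ^ p := by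
        rw [hfn]; simp only
        rw [Set.indicator_of_mem hxE, hg]; simp only
        rw [min_eq_left]
        exact le_trans hn₁.le (by exact_mod_cast Nat.cast_le.2 (le_max_right n₀ n₁))
      rw [← this]
      exact le_iSup (fun n => fn n x) n
  have lim : ∫⁻ x, S x ^ p ∂μ ≤ R ^ p := by
    calc ∫⁻ x, S x ^ p ∂μ ≤ ∫⁻ x, ⨆ n, fn n x ∂μ := lintegral_mono hpt
      _ = ⨆ n, ∫⁻ x, fn n x ∂μ := lintegral_iSup hfn_m hfn_mono
      _ = ⨆ n, ∫⁻ x in E n, g n x ^ p ∂μ := by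
          refine iSup_congr fun n => ?_
          rw [hfn]; simp only
          rw [lintegral_indicator (measurableSet_spanningSets μ n)]
      _ ≤ R ^ p := iSup_le key
  calc (∫⁻ x, S x ^ p ∂μ) ^ (1 / p) ≤ (R ^ p) ^ (1 / p) :=
        ENNReal.rpow_le_rpow lim (by positivity)
    _ = R := by rw [← ENNReal.rpow_mul, mul_one_div, div_self hp0.ne', ENNReal.rpow_one]


theorem my_schur_aux {X : Type*} [MeasurableSpace X] (μ : Measure X) [SigmaFinite μ]
    (α₁ β₁ γ₁ ρ₁ : ℝ)
    (hα₁ : 1 ≤ α₁) (hβ1 : 1 < β₁) (hγ₁ : 1 ≤ γ₁) (hρ₁ : 1 ≤ ρ₁)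
    (h₁ : α₁ ≤ ρ₁) (h₂ : ρ₁ ≤ β₁)
    (hexp : 1 / α₁ + 1 / β₁ + 1 / γ₁ = 1 + 1 / ρ₁)
    (K : X → X → ℝ≥0∞) (hK : Measurable fun q : X × X => K q.1 q.2)
    (F : X → ℝ≥0∞) (hF : Measurable F) (hFt : ∀ y, F y ≠ ⊤)
    (hΦ : (∫⁻ y, F y ^ γ₁ ∂μ) ≠ ⊤) :
    (∫⁻ x, (∫⁻ y, K x y * F y ∂μ) ^ ρ₁ ∂μ) ^ (1 / ρ₁) ≤
      max ((∫⁻ x, (∫⁻ y, K x y ^ α₁ ∂μ) ^ (β₁ / α₁) ∂μ) ^ (1 / β₁))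
          ((∫⁻ y, (∫⁻ x, K x y ^ α₁ ∂μ) ^ (β₁ / α₁) ∂μ) ^ (1 / β₁)) *
        (∫⁻ y, F y ^ γ₁ ∂μ) ^ (1 / γ₁) := by
  have hα0 : (0:ℝ) < α₁ := lt_of_lt_of_le one_pos hα₁
  have hβ0 : (0:ℝ) < β₁ := lt_trans one_pos hβ1
  have hγ0 : (0:ℝ) < γ₁ := lt_of_lt_of_le one_pos hγ₁
  have hρ0 : (0:ℝ) < ρ₁ := lt_of_lt_of_le one_pos hρ₁
  -- interpolation parameter
  obtain ⟨θ, hθ0, hθ1, hθρ⟩ : ∃ θ : ℝ, 0 ≤ θ ∧ θ ≤ 1 ∧ θ / β₁ + (1 - θ) / α₁ = 1 / ρ₁ := by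
    rcases eq_or_lt_of_le (h₁.trans h₂) with hab | hab
    · refine ⟨1, zero_le_one, le_rfl, ?_⟩
      have hρβ : ρ₁ = β₁ := le_antisymm h₂ (hab ▸ h₁)
      rw [hρβ]; ring
    · have hdpos : (0:ℝ) < 1 / α₁ - 1 / β₁ := by
        rw [sub_pos]
        exact one_div_lt_one_div_of_lt hα0 hab
      have hnum0 : (0:ℝ) ≤ 1 / α₁ - 1 / ρ₁ :=
        sub_nonneg.2 (one_div_le_one_div_of_le hα0 h₁)
      have hnum1 : 1 / α₁ - 1 / ρ₁ ≤ 1 / α₁ - 1 / β₁ := by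
        have := one_div_le_one_div_of_le hρ0 h₂
        linarith
      refine ⟨(1 / α₁ - 1 / ρ₁) / (1 / α₁ - 1 / β₁),
        div_nonneg hnum0 hdpos.le, (div_le_one hdpos).2 hnum1, ?_⟩
      have hcan : (1 / α₁ - 1 / ρ₁) / (1 / α₁ - 1 / β₁) * (1 / α₁ - 1 / β₁)
          = 1 / α₁ - 1 / ρ₁ := div_mul_cancel₀ _ hdpos.ne'
      set t := (1 / α₁ - 1 / ρ₁) / (1 / α₁ - 1 / β₁) with ht
      have hexpand : t / β₁ + (1 - t) / α₁ = 1 / α₁ - t * (1 / α₁ - 1 / β₁) := by ring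
      rw [hexpand, hcan]; ring
  have h1θ0 : (0:ℝ) ≤ 1 - θ := by linarith
  have hθρ' : θ * ρ₁ / β₁ + (1 - θ) * ρ₁ / α₁ = 1 := by
    have h3 : θ * ρ₁ / β₁ + (1 - θ) * ρ₁ / α₁ = (θ / β₁ + (1 - θ) / α₁) * ρ₁ := by ring
    rw [h3, hθρ]
    field_simp
  have hγrel : 1 / γ₁ = θ * (1 - 1 / α₁) + (1 - θ) * (1 - 1 / β₁) := by
    have h2 : 1 / γ₁ = 1 + (θ / β₁ + (1 - θ) / α₁) - 1 / α₁ - 1 / β₁ := by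
      rw [hθρ]; linarith [hexp]
    rw [h2]; ring
  set s : ℝ := γ₁ * (1 - 1 / α₁) with hs
  set σ : ℝ := γ₁ * (1 - 1 / β₁) with hσ
  have h1α : (0:ℝ) ≤ 1 - 1 / α₁ := by
    rw [sub_nonneg, div_le_one hα0]; exact hα₁
  have h1β : (0:ℝ) ≤ 1 - 1 / β₁ := by
    rw [sub_nonneg, div_le_one hβ0]; exact hβ1.le
  have hs0 : 0 ≤ s := mul_nonneg hγ0.le h1α
  have hσ0 : 0 ≤ σ := mul_nonneg hγ0.le h1β
  have hsum : θ * s + (1 - θ) * σ = 1 := by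
    have : θ * s + (1 - θ) * σ = γ₁ * (θ * (1 - 1 / α₁) + (1 - θ) * (1 - 1 / β₁)) := by
      rw [hs, hσ]; ring
    rw [this, ← hγrel]
    field_simp
  set u : X → ℝ≥0∞ := fun y => F y ^ s with hu
  set v : X → ℝ≥0∞ := fun y => F y ^ σ with hv
  set J : X → ℝ≥0∞ := fun x => ∫⁻ y, K x y ^ α₁ ∂μ with hJ
  set L : X → ℝ≥0∞ := fun y => ∫⁻ x, K x y ^ α₁ ∂μ with hL
  set Φ : ℝ≥0∞ := ∫⁻ y, F y ^ γ₁ ∂μ with hΦdef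
  set Aq : ℝ≥0∞ := ∫⁻ x, J x ^ (β₁ / α₁) ∂μ with hAq
  set Bq : ℝ≥0∞ := ∫⁻ y, L y ^ (β₁ / α₁) ∂μ with hBq
  set M : ℝ≥0∞ := max (Aq ^ (1 / β₁)) (Bq ^ (1 / β₁)) with hM
  set Tu : X → ℝ≥0∞ := fun x => ∫⁻ y, K x y * u y ∂μ with hTu
  set Tv : X → ℝ≥0∞ := fun x => ∫⁻ y, K x y * v y ∂μ with hTv
  have hKx : ∀ x, Measurable fun y => K x y := fun x => hK.comp measurable_prodMk_left
  have hKy : ∀ y, Measurable fun x => K x y := fun y => hK.comp measurable_prodMk_right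
  have hum : Measurable u := hF.pow_const s
  have hvm : Measurable v := hF.pow_const σ
  have hJm : Measurable J := (hK.pow_const α₁).lintegral_prod_right'
  have hLm : Measurable L := ((hK.comp measurable_swap).pow_const α₁).lintegral_prod_right'
  have hTum : Measurable Tu := (hK.mul (hum.comp measurable_snd)).lintegral_prod_right'
  have hTvm : Measurable Tv := (hK.mul (hvm.comp measurable_snd)).lintegral_prod_right'
  -- Step A
  have stepA : ∀ x, (∫⁻ y, K x y * F y ∂μ) ≤ Tu x ^ θ * Tv x ^ (1 - θ) := by
    intro x
    have hptw : ∀ y, K x y * F y = (K x y * u y) ^ θ * (K x y * v y) ^ (1 - θ) := by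
      intro y
      have e1 : K x y = K x y ^ θ * K x y ^ (1 - θ) := by
        rw [← ENNReal.rpow_add_of_nonneg _ _ hθ0 h1θ0]
        norm_num
      have e2 : F y = F y ^ (s * θ) * F y ^ (σ * (1 - θ)) := by
        rw [← ENNReal.rpow_add_of_nonneg _ _ (mul_nonneg hs0 hθ0) (mul_nonneg hσ0 h1θ0)]
        rw [show s * θ + σ * (1 - θ) = 1 from by linarith [hsum], ENNReal.rpow_one]
      calc K x y * F y = (K x y ^ θ * K x y ^ (1 - θ)) *
            (F y ^ (s * θ) * F y ^ (σ * (1 - θ))) := by rw [← e1, ← e2]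
        _ = (K x y ^ θ * F y ^ (s * θ)) * (K x y ^ (1 - θ) * F y ^ (σ * (1 - θ))) := by
            ring
        _ = (K x y * u y) ^ θ * (K x y * v y) ^ (1 - θ) := by
            rw [ENNReal.mul_rpow_of_nonneg _ _ hθ0, ENNReal.mul_rpow_of_nonneg _ _ h1θ0,
              hu, hv]
            simp only [← ENNReal.rpow_mul]
    calc (∫⁻ y, K x y * F y ∂μ)
        = ∫⁻ y, (K x y * u y) ^ θ * (K x y * v y) ^ (1 - θ) ∂μ := lintegral_congr hptw
      _ ≤ Tu x ^ θ * Tv x ^ (1 - θ) :=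
          ENNReal.lintegral_mul_norm_pow_le
            ((hKx x).mul hum).aemeasurable ((hKx x).mul hvm).aemeasurable hθ0 h1θ0 (by ring)
  -- Step B
  have stepB : ∀ x, Tu x ≤ J x ^ (1 / α₁) * Φ ^ (1 - 1 / α₁) := by
    intro x
    rcases eq_or_lt_of_le hα₁ with hα1 | hα1
    · have hs0' : s = 0 := by rw [hs, ← hα1]; ring
      have : Tu x = J x := by
        rw [hTu, hJ]
        refine lintegral_congr fun y => ?_
        rw [hu]
        simp only [hs0', ENNReal.rpow_zero, mul_one, ← hα1, ENNReal.rpow_one]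
      rw [this, ← hα1]
      simp
    · have hconj : α₁.HolderConjugate (α₁ / (α₁ - 1)) := Real.HolderConjugate.conjExponent hα1
      have hHold := ENNReal.lintegral_mul_le_Lp_mul_Lq μ hconj
        (f := fun y => K x y) (g := u) (hKx x).aemeasurable hum.aemeasurable
      simp only [Pi.mul_apply] at hHold
      have e3 : (∫⁻ y, u y ^ (α₁ / (α₁ - 1)) ∂μ) = Φ := by
        rw [hΦdef]
        refine lintegral_congr fun y => ?_
        rw [hu, ← ENNReal.rpow_mul]
        have h1' : α₁ - 1 ≠ 0 := by linarith
        congr 1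
        rw [hs]
        field_simp
      have e4 : 1 / (α₁ / (α₁ - 1)) = 1 - 1 / α₁ := by
        have h1' : α₁ - 1 ≠ 0 := by linarith
        rw [one_div_div]
        field_simp
      rw [e3, e4] at hHold
      exact hHold
  -- Step C
  have stepC : (∫⁻ x, Tv x ^ α₁ ∂μ) ^ (1 / α₁) ≤ Bq ^ (1 / β₁) * Φ ^ (1 - 1 / β₁) := by
    have hmink := my_minkowski_lintegral μ μ
      (h := fun x y => K x y * v y) (hK.mul (hvm.comp measurable_snd)) hα₁
    have einner : ∀ y, (∫⁻ x, (K x y * v y) ^ α₁ ∂μ) ^ (1 / α₁) = L y ^ (1 / α₁) * v y := by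
      intro y
      have hvfin : v y ^ α₁ ≠ ⊤ :=
        ENNReal.rpow_ne_top_of_nonneg hα0.le (ENNReal.rpow_ne_top_of_nonneg hσ0 (hFt y))
      have : (∫⁻ x, (K x y * v y) ^ α₁ ∂μ) = L y * v y ^ α₁ := by
        rw [hL]
        rw [← lintegral_mul_const' _ _ hvfin]
        refine lintegral_congr fun x => ?_
        rw [ENNReal.mul_rpow_of_nonneg _ _ hα0.le]
      rw [this, ENNReal.mul_rpow_of_nonneg _ _ (by positivity : (0:ℝ) ≤ 1 / α₁),
        ← ENNReal.rpow_mul, mul_one_div, div_self hα0.ne', ENNReal.rpow_one]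
    have hβconj : β₁.HolderConjugate (β₁ / (β₁ - 1)) := Real.HolderConjugate.conjExponent hβ1
    have hHold := ENNReal.lintegral_mul_le_Lp_mul_Lq μ hβconj
      (f := fun y => L y ^ (1 / α₁)) (g := v)
      (hLm.pow_const _).aemeasurable hvm.aemeasurable
    simp only [Pi.mul_apply] at hHold
    have e5 : (∫⁻ y, (L y ^ (1 / α₁)) ^ β₁ ∂μ) = Bq := by
      rw [hBq]
      refine lintegral_congr fun y => ?_
      rw [← ENNReal.rpow_mul, one_div_mul_eq_div]
    have e6 : (∫⁻ y, v y ^ (β₁ / (β₁ - 1)) ∂μ) = Φ := by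
      rw [hΦdef]
      refine lintegral_congr fun y => ?_
      rw [hv, ← ENNReal.rpow_mul]
      have h1' : β₁ - 1 ≠ 0 := by linarith
      congr 1
      rw [hσ]
      field_simp
    have e7 : 1 / (β₁ / (β₁ - 1)) = 1 - 1 / β₁ := by
      have h1' : β₁ - 1 ≠ 0 := by linarith
      rw [one_div_div]
      field_simp
    rw [e5, e6, e7] at hHold
    calc (∫⁻ x, Tv x ^ α₁ ∂μ) ^ (1 / α₁)
        ≤ ∫⁻ y, (∫⁻ x, (K x y * v y) ^ α₁ ∂μ) ^ (1 / α₁) ∂μ := hmink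
      _ = ∫⁻ y, L y ^ (1 / α₁) * v y ∂μ := lintegral_congr einner
      _ ≤ Bq ^ (1 / β₁) * Φ ^ (1 - 1 / β₁) := hHold
  -- Bounds with M
  have hAqM : Aq ≤ M ^ β₁ := by
    have : Aq = (Aq ^ (1 / β₁)) ^ β₁ := by
      rw [← ENNReal.rpow_mul, one_div, inv_mul_cancel₀ hβ0.ne', ENNReal.rpow_one]
    rw [this]
    exact ENNReal.rpow_le_rpow (le_max_left _ _) hβ0.le
  have hBqM : Bq ^ (1 / β₁) ≤ M := le_max_right _ _
  set e₁ : ℝ := (1 - 1 / α₁) * β₁ with he₁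
  set e₂ : ℝ := 1 - 1 / β₁ with he₂
  -- Step 3 : ∫ Tu^β ≤ M^β * Φ^e₁
  have step3 : (∫⁻ x, Tu x ^ β₁ ∂μ) ≤ M ^ β₁ * Φ ^ e₁ := by
    have hΦe : Φ ^ e₁ ≠ ⊤ :=
      ENNReal.rpow_ne_top_of_nonneg (mul_nonneg h1α hβ0.le) hΦ
    calc (∫⁻ x, Tu x ^ β₁ ∂μ)
        ≤ ∫⁻ x, (J x ^ (1 / α₁) * Φ ^ (1 - 1 / α₁)) ^ β₁ ∂μ :=
          lintegral_mono fun x => ENNReal.rpow_le_rpow (stepB x) hβ0.le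
      _ = ∫⁻ x, J x ^ (β₁ / α₁) * Φ ^ e₁ ∂μ := by
          refine lintegral_congr fun x => ?_
          rw [ENNReal.mul_rpow_of_nonneg _ _ hβ0.le, ← ENNReal.rpow_mul, ← ENNReal.rpow_mul,
            one_div_mul_eq_div]
      _ = Aq * Φ ^ e₁ := lintegral_mul_const' _ _ hΦe
      _ ≤ M ^ β₁ * Φ ^ e₁ := mul_le_mul_left hAqM _
  -- Step 4 : ∫ Tv^α ≤ (M * Φ^e₂)^α
  have step4 : (∫⁻ x, Tv x ^ α₁ ∂μ) ≤ (M * Φ ^ e₂) ^ α₁ := by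
    have : (∫⁻ x, Tv x ^ α₁ ∂μ) = ((∫⁻ x, Tv x ^ α₁ ∂μ) ^ (1 / α₁)) ^ α₁ := by
      rw [← ENNReal.rpow_mul, one_div, inv_mul_cancel₀ hα0.ne', ENNReal.rpow_one]
    rw [this]
    refine ENNReal.rpow_le_rpow ?_ hα0.le
    exact stepC.trans (mul_le_mul_left hBqM _)
  -- Step D : put everything together
  set w₁ : ℝ := θ * ρ₁ / β₁ with hw₁
  set w₂ : ℝ := (1 - θ) * ρ₁ / α₁ with hw₂
  have hw₁0 : 0 ≤ w₁ := by positivity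
  have hw₂0 : 0 ≤ w₂ := by
    rw [hw₂]; positivity
  have stepD1 : (∫⁻ x, (∫⁻ y, K x y * F y ∂μ) ^ ρ₁ ∂μ)
      ≤ ∫⁻ x, (Tu x ^ β₁) ^ w₁ * (Tv x ^ α₁) ^ w₂ ∂μ := by
    refine lintegral_mono fun x => ?_
    calc (∫⁻ y, K x y * F y ∂μ) ^ ρ₁ ≤ (Tu x ^ θ * Tv x ^ (1 - θ)) ^ ρ₁ :=
          ENNReal.rpow_le_rpow (stepA x) hρ0.le
      _ = (Tu x ^ β₁) ^ w₁ * (Tv x ^ α₁) ^ w₂ := by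
          rw [ENNReal.mul_rpow_of_nonneg _ _ hρ0.le, ← ENNReal.rpow_mul, ← ENNReal.rpow_mul,
            ← ENNReal.rpow_mul, ← ENNReal.rpow_mul]
          congr 1
          · congr 1
            rw [hw₁]; field_simp
          · congr 1
            rw [hw₂]; field_simp
  have stepD2 : (∫⁻ x, (Tu x ^ β₁) ^ w₁ * (Tv x ^ α₁) ^ w₂ ∂μ)
      ≤ (∫⁻ x, Tu x ^ β₁ ∂μ) ^ w₁ * (∫⁻ x, Tv x ^ α₁ ∂μ) ^ w₂ :=
    ENNReal.lintegral_mul_norm_pow_le (hTum.pow_const β₁).aemeasurable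
      (hTvm.pow_const α₁).aemeasurable hw₁0 hw₂0 (by rw [hw₁, hw₂]; exact hθρ')
  have stepD3 : (∫⁻ x, Tu x ^ β₁ ∂μ) ^ w₁ * (∫⁻ x, Tv x ^ α₁ ∂μ) ^ w₂
      ≤ (M * Φ ^ (1 / γ₁)) ^ ρ₁ := by
    calc (∫⁻ x, Tu x ^ β₁ ∂μ) ^ w₁ * (∫⁻ x, Tv x ^ α₁ ∂μ) ^ w₂
        ≤ (M ^ β₁ * Φ ^ e₁) ^ w₁ * ((M * Φ ^ e₂) ^ α₁) ^ w₂ :=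
          mul_le_mul' (ENNReal.rpow_le_rpow step3 hw₁0) (ENNReal.rpow_le_rpow step4 hw₂0)
      _ = (M ^ (β₁ * w₁) * M ^ (α₁ * w₂)) * (Φ ^ (e₁ * w₁) * Φ ^ (e₂ * (α₁ * w₂))) := by
          have f1 : (M ^ β₁ * Φ ^ e₁) ^ w₁ = M ^ (β₁ * w₁) * Φ ^ (e₁ * w₁) := by
            rw [ENNReal.mul_rpow_of_nonneg _ _ hw₁0, ← ENNReal.rpow_mul, ← ENNReal.rpow_mul]
          have f2 : ((M * Φ ^ e₂) ^ α₁) ^ w₂ = M ^ (α₁ * w₂) * Φ ^ (e₂ * (α₁ * w₂)) := by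
            rw [← ENNReal.rpow_mul, ENNReal.mul_rpow_of_nonneg _ _ (mul_nonneg hα0.le hw₂0),
              ← ENNReal.rpow_mul]
          rw [f1, f2]
          ring
      _ = M ^ (β₁ * w₁ + α₁ * w₂) * Φ ^ (e₁ * w₁ + e₂ * (α₁ * w₂)) := by
          rw [ENNReal.rpow_add_of_nonneg _ _ (mul_nonneg hβ0.le hw₁0) (mul_nonneg hα0.le hw₂0),
            ENNReal.rpow_add_of_nonneg _ _ (mul_nonneg (mul_nonneg h1α hβ0.le) hw₁0)
              (mul_nonneg h1β (mul_nonneg hα0.le hw₂0))]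
      _ = M ^ ρ₁ * Φ ^ (ρ₁ * (1 / γ₁)) := by
          have c1 : β₁ * w₁ = θ * ρ₁ := by
            rw [hw₁, mul_comm β₁ (θ * ρ₁ / β₁), div_mul_cancel₀ _ hβ0.ne']
          have c2 : α₁ * w₂ = (1 - θ) * ρ₁ := by
            rw [hw₂, mul_comm α₁ ((1 - θ) * ρ₁ / α₁), div_mul_cancel₀ _ hα0.ne']
          have eM : β₁ * w₁ + α₁ * w₂ = ρ₁ := by rw [c1, c2]; ring
          have eΦ : e₁ * w₁ + e₂ * (α₁ * w₂) = ρ₁ * (1 / γ₁) := by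
            have expand : e₁ * w₁ + e₂ * (α₁ * w₂)
                = (1 - 1 / α₁) * (β₁ * w₁) + (1 - 1 / β₁) * (α₁ * w₂) := by
              rw [he₁, he₂]; ring
            rw [expand, c1, c2, hγrel]; ring
          rw [eM, eΦ]
      _ = (M * Φ ^ (1 / γ₁)) ^ ρ₁ := by
          rw [ENNReal.mul_rpow_of_nonneg _ _ hρ0.le, mul_comm ρ₁ (1 / γ₁), ENNReal.rpow_mul]
  calc (∫⁻ x, (∫⁻ y, K x y * F y ∂μ) ^ ρ₁ ∂μ) ^ (1 / ρ₁)
      ≤ ((M * Φ ^ (1 / γ₁)) ^ ρ₁) ^ (1 / ρ₁) :=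
        ENNReal.rpow_le_rpow ((stepD1.trans stepD2).trans stepD3) (by positivity)
    _ = M * Φ ^ (1 / γ₁) := by
        rw [← ENNReal.rpow_mul, mul_one_div, div_self hρ0.ne', ENNReal.rpow_one]

/-- Schur-type bound for integral operators with mixed-norm kernel hypotheses:
if `k ∈ L_x^{β₁}L_y^{α₁} ∩ L_y^{β₁}L_x^{α₁}` and `α₁ ≤ ρ₁ ≤ β₁`,
`1/α₁ + 1/β₁ + 1/γ₁ = 1 + 1/ρ₁`, then `K : L^{γ₁} → L^{ρ₁}` with norm at most
`max(‖k‖_{L_x^{β₁}L_y^{α₁}}, ‖k‖_{L_y^{β₁}L_x^{α₁}})`. -/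
theorem schur_type_integral_operator_bound (N : ℕ) (hN : 1 ≤ N)
    (α₁ β₁ γ₁ ρ₁ : ℝ)
    (hα₁ : 1 ≤ α₁) (hβ₁ : 1 ≤ β₁) (hγ₁ : 1 ≤ γ₁) (hρ₁ : 1 ≤ ρ₁)
    (h₁ : α₁ ≤ ρ₁) (h₂ : ρ₁ ≤ β₁)
    (hexp : 1 / α₁ + 1 / β₁ + 1 / γ₁ = 1 + 1 / ρ₁)
    (k : EuclideanSpace ℝ (Fin N) → EuclideanSpace ℝ (Fin N) → ℝ)
    (hk : Measurable fun q : EuclideanSpace ℝ (Fin N) × EuclideanSpace ℝ (Fin N) => k q.1 q.2)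
    (hA : (∫⁻ x, (∫⁻ y, ENNReal.ofReal |k x y| ^ α₁) ^ (β₁ / α₁)) ^ (1 / β₁) < ⊤)
    (hB : (∫⁻ y, (∫⁻ x, ENNReal.ofReal |k x y| ^ α₁) ^ (β₁ / α₁)) ^ (1 / β₁) < ⊤)
    (f : EuclideanSpace ℝ (Fin N) → ℝ) (hf : Measurable f)
    (hfL : (∫⁻ x, ENNReal.ofReal |f x| ^ γ₁) < ⊤) :
    (∫⁻ x, (∫⁻ y, ENNReal.ofReal (|k x y| * |f y|)) ^ ρ₁) ^ (1 / ρ₁) ≤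
      max ((∫⁻ x, (∫⁻ y, ENNReal.ofReal |k x y| ^ α₁) ^ (β₁ / α₁)) ^ (1 / β₁))
          ((∫⁻ y, (∫⁻ x, ENNReal.ofReal |k x y| ^ α₁) ^ (β₁ / α₁)) ^ (1 / β₁)) *
        (∫⁻ x, ENNReal.ofReal |f x| ^ γ₁) ^ (1 / γ₁) := by
  have hγ0 : (0:ℝ) < γ₁ := lt_of_lt_of_le one_pos hγ₁
  have hβ1 : 1 < β₁ := by
    rcases lt_or_eq_of_le hβ₁ with h | h
    · exact h
    · exfalso
      have hρ : ρ₁ = 1 := le_antisymm (h ▸ h₂) hρ₁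
      have hα : α₁ = 1 := le_antisymm (hρ ▸ h₁) hα₁
      have hγpos : 0 < 1 / γ₁ := by positivity
      rw [hα, hρ, ← h] at hexp
      norm_num at hexp
      linarith
  have hconv : ∀ x, (∫⁻ y, ENNReal.ofReal (|k x y| * |f y|)) =
      ∫⁻ y, ENNReal.ofReal |k x y| * ENNReal.ofReal |f y| := fun x =>
    lintegral_congr fun y => ENNReal.ofReal_mul (abs_nonneg _)
  calc (∫⁻ x, (∫⁻ y, ENNReal.ofReal (|k x y| * |f y|)) ^ ρ₁) ^ (1 / ρ₁)
      = (∫⁻ x, (∫⁻ y, ENNReal.ofReal |k x y| * ENNReal.ofReal |f y|) ^ ρ₁) ^ (1 / ρ₁) := by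
        rw [lintegral_congr fun x => by rw [hconv x]]
    _ ≤ _ := my_schur_aux volume α₁ β₁ γ₁ ρ₁ hα₁ hβ1 hγ₁ hρ₁ h₁ h₂ hexp
        (fun x y => ENNReal.ofReal |k x y|) (hk.abs.ennreal_ofReal)
        (fun y => ENNReal.ofReal |f y|) (hf.abs.ennreal_ofReal)
        (fun y => ENNReal.ofReal_ne_top) hfL.ne
end

section
/- Let N ≥ 1 and α₁, β₁ ∈ [1, ∞) with α₁ ≤ β₁ and 1/α₁ + 1/β₁ ≤ 4/N, and set 1/γ₁ := 1 − (1/2)(1/α₁ + 1/β₁). Let k : ℝ^N × ℝ^N → ℝ be measurable and symmetric (k(x,y) = k(y,x) for all x, y) with A := (∫ (∫ |k(x,y)|^{α₁} dy)^{β₁/α₁} dx)^{1/β₁} < ∞. Then for all measurable f, g : ℝ^N → ℝ with finite L^{γ₁} norms, ∫_{ℝ^N} |g(x)| (∫_{ℝ^N} |k(x,y)| |f(y)| dy) dx ≤ A ‖f‖_{L^{γ₁}} ‖g‖_{L^{γ₁}}, and the function x ↦ ∫ |k(x,y)||f(y)| dy has L^{γ₁'} norm at most A ‖f‖_{L^{γ₁}},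 where γ₁' is the Hölder conjugate of γ₁. -/
open MeasureTheory Real
open scoped ENNReal BigOperators

section Aux

variable {X : Type*} [MeasurableSpace X] {μ : Measure X} [SigmaFinite μ]

private lemma meas_rpow {F : X → ℝ≥0∞} (hF : Measurable F) (c : ℝ) :
    Measurable fun x => F x ^ c :=
  ENNReal.continuous_rpow_const.measurable.comp hF

/-- Hölder step in the inner variable. -/
private lemma holder_step {α c : ℝ} (hα : 1 ≤ α) (hc : 0 ≤ c)
    {K F : X → ℝ≥0∞} (hK : Measurable K) (hF : Measurable F) :
    ∫⁻ y, K y * F y ^ (c * (1 - 1/α)) ∂μ ≤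
      (∫⁻ y, K y ^ α ∂μ) ^ (1/α) * (∫⁻ y, F y ^ c ∂μ) ^ (1 - 1/α) := by
  rcases eq_or_lt_of_le hα with h1 | h1
  · subst h1
    simp [ENNReal.rpow_one]
  · have hα0 : 0 < α := lt_trans one_pos h1
    have hconj : α.HolderConjugate (α/(α-1)) := Real.HolderConjugate.conjExponent h1
    have hinv : 1/(α/(α-1)) = 1 - 1/α := by
      field_simp
    have hne : α - 1 ≠ 0 := by linarith
    have hexp : c * (1 - 1/α) * (α/(α-1)) = c := by
      field_simp
    calc ∫⁻ y, K y * F y ^ (c * (1 - 1/α)) ∂μ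
        = ∫⁻ y, (K * fun y => F y ^ (c * (1 - 1/α))) y ∂μ := by
          simp [Pi.mul_apply]
      _ ≤ (∫⁻ y, K y ^ α ∂μ) ^ (1/α) *
            (∫⁻ y, (F y ^ (c * (1 - 1/α))) ^ (α/(α-1)) ∂μ) ^ (1/(α/(α-1))) :=
          ENNReal.lintegral_mul_le_Lp_mul_Lq μ hconj hK.aemeasurable
            (meas_rpow hF _).aemeasurable
      _ = (∫⁻ y, K y ^ α ∂μ) ^ (1/α) * (∫⁻ y, F y ^ c ∂μ) ^ (1 - 1/α) := by
          simp_rw [← ENNReal.rpow_mul, hexp, hinv]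


/-- One endpoint factor bound: inner Hölder, then outer Hölder against the mixed norm. -/
private lemma factor_bound {α β c : ℝ} (hα : 1 ≤ α) (hβ : 1 < β) (hc : 0 ≤ c)
    {K : X → X → ℝ≥0∞} (hK : Measurable fun p : X × X => K p.1 p.2)
    {P Q : X → ℝ≥0∞} (hP : Measurable P) (hQ : Measurable Q) :
    ∫⁻ x, Q x ^ (c * (1 - 1/β)) * ∫⁻ y, K x y * P y ^ (c * (1 - 1/α)) ∂μ ∂μ ≤
      (∫⁻ x, (∫⁻ y, K x y ^ α ∂μ) ^ (β/α) ∂μ) ^ (1/β) *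
        (∫⁻ y, P y ^ c ∂μ) ^ (1 - 1/α) * (∫⁻ x, Q x ^ c ∂μ) ^ (1 - 1/β) := by
  have hα0 : 0 < α := lt_of_lt_of_le one_pos hα
  have hβne : β - 1 ≠ 0 := by nlinarith
  set W : X → ℝ≥0∞ := fun x => (∫⁻ y, K x y ^ α ∂μ) ^ (1/α) with hWdef
  have hWm : Measurable W :=
    meas_rpow ((meas_rpow hK α).lintegral_prod_right') _
  set Ip := (∫⁻ y, P y ^ c ∂μ) ^ (1 - 1/α) with hIp
  have step1 : (∫⁻ x, Q x ^ (c * (1 - 1/β)) * ∫⁻ y, K x y * P y ^ (c * (1 - 1/α)) ∂μ ∂μ)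
      ≤ ∫⁻ x, (Q x ^ (c * (1 - 1/β)) * W x) * Ip ∂μ := by
    refine lintegral_mono fun x => ?_
    rw [mul_assoc]
    exact mul_le_mul_right (holder_step hα hc (hK.comp (measurable_prodMk_left)) hP) _
  have step2 : (∫⁻ x, (Q x ^ (c * (1 - 1/β)) * W x) * Ip ∂μ)
      = (∫⁻ x, Q x ^ (c * (1 - 1/β)) * W x ∂μ) * Ip :=
    lintegral_mul_const _ ((meas_rpow hQ _).mul hWm)
  have hconj : (β/(β-1)).HolderConjugate β := (Real.HolderConjugate.conjExponent hβ).symm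
  have hinv : 1/(β/(β-1)) = 1 - 1/β := by field_simp
  have hexp : c * (1 - 1/β) * (β/(β-1)) = c := by field_simp
  have step3 : (∫⁻ x, Q x ^ (c * (1 - 1/β)) * W x ∂μ)
      ≤ (∫⁻ x, Q x ^ c ∂μ) ^ (1 - 1/β) *
        (∫⁻ x, (∫⁻ y, K x y ^ α ∂μ) ^ (β/α) ∂μ) ^ (1/β) := by
    have h := ENNReal.lintegral_mul_le_Lp_mul_Lq μ hconj
      (meas_rpow hQ (c * (1 - 1/β))).aemeasurable hWm.aemeasurable
    simp only [Pi.mul_apply] at h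
    refine h.trans (le_of_eq ?_)
    congr 1
    · simp_rw [← ENNReal.rpow_mul, hexp, hinv]
    · congr 1
      refine lintegral_congr fun x => ?_
      rw [hWdef, ← ENNReal.rpow_mul]
      congr 1
      field_simp
  calc (∫⁻ x, Q x ^ (c * (1 - 1/β)) * ∫⁻ y, K x y * P y ^ (c * (1 - 1/α)) ∂μ ∂μ)
      ≤ (∫⁻ x, Q x ^ (c * (1 - 1/β)) * W x ∂μ) * Ip := step1.trans (le_of_eq step2)
    _ ≤ ((∫⁻ x, Q x ^ c ∂μ) ^ (1 - 1/β) *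
        (∫⁻ x, (∫⁻ y, K x y ^ α ∂μ) ^ (β/α) ∂μ) ^ (1/β)) * Ip :=
        mul_le_mul_left step3 _
    _ = _ := by rw [hIp]; ring

private lemma collect_rpow (u : ℝ≥0∞) {p q : ℝ} (hp : 0 ≤ p) (hq : 0 ≤ q) :
    (u ^ p) ^ ((2:ℝ)⁻¹) * (u ^ q) ^ ((2:ℝ)⁻¹) = u ^ ((p + q)/2) := by
  rw [← ENNReal.rpow_mul, ← ENNReal.rpow_mul,
    ← ENNReal.rpow_add_of_nonneg _ _ (by positivity) (by positivity)]
  ring_nf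

/-- The interpolated bilinear estimate for a symmetric positive kernel. -/
private lemma bilinear_bound {α β γ : ℝ} (hα : 1 ≤ α) (hβ : 1 < β) (hγ0 : 0 < γ)
    (hγdef : 1/γ = 1 - (1/α + 1/β)/2)
    {K : X → X → ℝ≥0∞} (hK : Measurable fun p : X × X => K p.1 p.2)
    (hsymm : ∀ x y, K x y = K y x)
    {F G : X → ℝ≥0∞} (hF : Measurable F) (hG : Measurable G) :
    ∫⁻ x, G x * ∫⁻ y, K x y * F y ∂μ ∂μ ≤
      (∫⁻ x, (∫⁻ y, K x y ^ α ∂μ) ^ (β/α) ∂μ) ^ (1/β) *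
        (∫⁻ x, F x ^ γ ∂μ) ^ (1/γ) * (∫⁻ x, G x ^ γ ∂μ) ^ (1/γ) := by
  have hα0 : 0 < α := lt_of_lt_of_le one_pos hα
  have hβ0 : 0 < β := lt_trans one_pos hβ
  set a := γ * (1 - 1/α) with hadef
  set b := γ * (1 - 1/β) with hbdef
  have ha : 0 ≤ a := by
    have : 1/α ≤ 1 := by rw [div_le_one hα0]; exact hα
    nlinarith
  have hb : 0 ≤ b := by
    have : 1/β ≤ 1 := by rw [div_le_one hβ0]; linarith
    nlinarith
  have hab : a + b = 2 := by
    have hγne : γ ≠ 0 := ne_of_gt hγ0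
    have : (1:ℝ)/γ * γ = 1 := by field_simp
    rw [hγdef] at this
    rw [hadef, hbdef]
    nlinarith
  -- the two half-factors
  set Φ₁ : X × X → ℝ≥0∞ := fun p => K p.1 p.2 * F p.2 ^ a * G p.1 ^ b with hΦ₁
  set Φ₂ : X × X → ℝ≥0∞ := fun p => K p.1 p.2 * F p.2 ^ b * G p.1 ^ a with hΦ₂
  have hΦ₁m : Measurable Φ₁ :=
    (hK.mul (meas_rpow (hF.comp measurable_snd) a)).mul (meas_rpow (hG.comp measurable_fst) b)
  have hΦ₂m : Measurable Φ₂ :=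
    (hK.mul (meas_rpow (hF.comp measurable_snd) b)).mul (meas_rpow (hG.comp measurable_fst) a)
  have two_eq : ∀ u : ℝ≥0∞, u ^ (2:ℝ) = u * u := fun u => by
    rw [show (2:ℝ) = 1 + 1 by norm_num,
      ENNReal.rpow_add_of_nonneg _ _ zero_le_one zero_le_one, ENNReal.rpow_one]
  have half_sq : ∀ u : ℝ≥0∞, (u ^ ((2:ℝ)⁻¹)) ^ (2:ℝ) = u := fun u => by
    rw [← ENNReal.rpow_mul]; norm_num
  -- pointwise splitting
  have hpoint : ∀ p : X × X, G p.1 * (K p.1 p.2 * F p.2)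
      = Φ₁ p ^ ((2:ℝ)⁻¹) * Φ₂ p ^ ((2:ℝ)⁻¹) := by
    intro p
    rw [← ENNReal.mul_rpow_of_nonneg _ _ (by norm_num : (0:ℝ) ≤ 2⁻¹)]
    have : Φ₁ p * Φ₂ p = (G p.1 * (K p.1 p.2 * F p.2)) ^ (2:ℝ) := by
      rw [two_eq, hΦ₁, hΦ₂]
      simp only
      have hFab : F p.2 ^ a * F p.2 ^ b = F p.2 * F p.2 := by
        rw [← ENNReal.rpow_add_of_nonneg _ _ ha hb, hab, two_eq]
      have hGab : G p.1 ^ b * G p.1 ^ a = G p.1 * G p.1 := by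
        rw [← ENNReal.rpow_add_of_nonneg _ _ hb ha, add_comm b a, hab, two_eq]
      calc K p.1 p.2 * F p.2 ^ a * G p.1 ^ b * (K p.1 p.2 * F p.2 ^ b * G p.1 ^ a)
          = (K p.1 p.2 * K p.1 p.2) * (F p.2 ^ a * F p.2 ^ b) * (G p.1 ^ b * G p.1 ^ a) := by
            ring
        _ = _ := by rw [hFab, hGab]; ring
    rw [this, ← ENNReal.rpow_mul]
    norm_num
  -- pass to the product measure and apply Cauchy–Schwarz
  have hdouble : (∫⁻ x, G x * ∫⁻ y, K x y * F y ∂μ ∂μ)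
      = ∫⁻ p, G p.1 * (K p.1 p.2 * F p.2) ∂(μ.prod μ) := by
    have hm : Measurable fun p : X × X => G p.1 * (K p.1 p.2 * F p.2) :=
      (hG.comp measurable_fst).mul (hK.mul (hF.comp measurable_snd))
    rw [lintegral_prod _ hm.aemeasurable]
    refine lintegral_congr fun x => ?_
    have hm2 : Measurable fun y => K x y * F y :=
      (hK.comp measurable_prodMk_left).mul hF
    show G x * ∫⁻ y, K x y * F y ∂μ = ∫⁻ y, G x * (K x y * F y) ∂μ
    rw [lintegral_const_mul _ hm2]
  have hCS : (∫⁻ p, G p.1 * (K p.1 p.2 * F p.2) ∂(μ.prod μ))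
      ≤ (∫⁻ p, Φ₁ p ∂(μ.prod μ)) ^ ((2:ℝ)⁻¹) * (∫⁻ p, Φ₂ p ∂(μ.prod μ)) ^ ((2:ℝ)⁻¹) := by
    have h2 : (2:ℝ).HolderConjugate 2 := by
      exact (Real.holderConjugate_iff_eq_conjExponent (by norm_num)).2 (by norm_num)
    have h := ENNReal.lintegral_mul_le_Lp_mul_Lq (μ.prod μ) h2
      (meas_rpow hΦ₁m ((2:ℝ)⁻¹)).aemeasurable (meas_rpow hΦ₂m ((2:ℝ)⁻¹)).aemeasurable
    simp only [Pi.mul_apply] at h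
    simp_rw [half_sq, one_div] at h
    calc (∫⁻ p, G p.1 * (K p.1 p.2 * F p.2) ∂(μ.prod μ))
        = ∫⁻ p, Φ₁ p ^ ((2:ℝ)⁻¹) * Φ₂ p ^ ((2:ℝ)⁻¹) ∂(μ.prod μ) :=
          lintegral_congr fun p => hpoint p
      _ ≤ _ := h
  -- first factor
  set A := (∫⁻ x, (∫⁻ y, K x y ^ α ∂μ) ^ (β/α) ∂μ) ^ (1/β) with hAdef
  set If := ∫⁻ x, F x ^ γ ∂μ with hIf
  set Ig := ∫⁻ x, G x ^ γ ∂μ with hIg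
  have hfac1 : (∫⁻ p, Φ₁ p ∂(μ.prod μ)) ≤ A * If ^ (1 - 1/α) * Ig ^ (1 - 1/β) := by
    rw [lintegral_prod _ hΦ₁m.aemeasurable]
    have : ∀ x, (∫⁻ y, Φ₁ (x, y) ∂μ)
        = G x ^ b * ∫⁻ y, K x y * F y ^ a ∂μ := by
      intro x
      have hm2 : Measurable fun y => K x y * F y ^ a :=
        (hK.comp measurable_prodMk_left).mul (meas_rpow hF a)
      rw [← lintegral_const_mul _ hm2]
      exact lintegral_congr fun y => by rw [hΦ₁]; ring
    simp_rw [this]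
    exact factor_bound hα hβ (le_of_lt hγ0) hK hF hG
  -- second factor, via the symmetry of the kernel
  have hswap : (∫⁻ p, Φ₂ p ∂(μ.prod μ)) = ∫⁻ p : X × X, K p.1 p.2 * G p.2 ^ a * F p.1 ^ b ∂(μ.prod μ) := by
    rw [← lintegral_prod_swap Φ₂]
    refine lintegral_congr fun p => ?_
    rw [hΦ₂]
    simp only [Prod.fst_swap, Prod.snd_swap]
    rw [hsymm p.2 p.1]
    ring
  have hfac2 : (∫⁻ p, Φ₂ p ∂(μ.prod μ)) ≤ A * Ig ^ (1 - 1/α) * If ^ (1 - 1/β) := by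
    have hm : Measurable fun p : X × X => K p.1 p.2 * G p.2 ^ a * F p.1 ^ b :=
      (hK.mul (meas_rpow (hG.comp measurable_snd) a)).mul (meas_rpow (hF.comp measurable_fst) b)
    rw [hswap, lintegral_prod _ hm.aemeasurable]
    have : ∀ x, (∫⁻ y, K x y * G y ^ a * F x ^ b ∂μ)
        = F x ^ b * ∫⁻ y, K x y * G y ^ a ∂μ := by
      intro x
      have hm2 : Measurable fun y => K x y * G y ^ a :=
        (hK.comp measurable_prodMk_left).mul (meas_rpow hG a)
      rw [← lintegral_const_mul _ hm2]
      exact lintegral_congr fun y => by ring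
    simp_rw [this]
    exact factor_bound hα hβ (le_of_lt hγ0) hK hG hF
  -- combine
  have hfinal : (∫⁻ p, Φ₁ p ∂(μ.prod μ)) ^ ((2:ℝ)⁻¹) * (∫⁻ p, Φ₂ p ∂(μ.prod μ)) ^ ((2:ℝ)⁻¹)
      ≤ A * If ^ (1/γ) * Ig ^ (1/γ) := by
    have hhalf : (0:ℝ) ≤ 2⁻¹ := by norm_num
    have hAA : A ^ ((2:ℝ)⁻¹) * A ^ ((2:ℝ)⁻¹) = A := by
      rw [← ENNReal.rpow_add_of_nonneg _ _ hhalf hhalf]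
      norm_num
    have hexpγ : ((1 - 1/α) + (1 - 1/β))/2 = 1/γ := by rw [hγdef]; ring
    calc (∫⁻ p, Φ₁ p ∂(μ.prod μ)) ^ ((2:ℝ)⁻¹) * (∫⁻ p, Φ₂ p ∂(μ.prod μ)) ^ ((2:ℝ)⁻¹)
        ≤ (A * If ^ (1 - 1/α) * Ig ^ (1 - 1/β)) ^ ((2:ℝ)⁻¹) *
          (A * Ig ^ (1 - 1/α) * If ^ (1 - 1/β)) ^ ((2:ℝ)⁻¹) :=
          mul_le_mul' (ENNReal.rpow_le_rpow hfac1 hhalf) (ENNReal.rpow_le_rpow hfac2 hhalf)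
      _ = (A ^ ((2:ℝ)⁻¹) * A ^ ((2:ℝ)⁻¹)) *
            ((If ^ (1 - 1/α)) ^ ((2:ℝ)⁻¹) * (If ^ (1 - 1/β)) ^ ((2:ℝ)⁻¹)) *
            ((Ig ^ (1 - 1/α)) ^ ((2:ℝ)⁻¹) * (Ig ^ (1 - 1/β)) ^ ((2:ℝ)⁻¹)) := by
          rw [ENNReal.mul_rpow_of_nonneg _ _ hhalf, ENNReal.mul_rpow_of_nonneg _ _ hhalf,
            ENNReal.mul_rpow_of_nonneg _ _ hhalf, ENNReal.mul_rpow_of_nonneg _ _ hhalf]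
          ring
      _ = A * If ^ (1/γ) * Ig ^ (1/γ) := by
          have h1 : 0 ≤ 1 - 1/α := by
            have : 1/α ≤ 1 := by rw [div_le_one hα0]; exact hα
            linarith
          have h2 : 0 ≤ 1 - 1/β := by
            have : 1/β ≤ 1 := by rw [div_le_one hβ0]; linarith
            linarith
          rw [hAA, collect_rpow If h1 h2, collect_rpow Ig h1 h2, hexpγ]
  calc (∫⁻ x, G x * ∫⁻ y, K x y * F y ∂μ ∂μ)
      = ∫⁻ p, G p.1 * (K p.1 p.2 * F p.2) ∂(μ.prod μ) := hdouble
    _ ≤ (∫⁻ p, Φ₁ p ∂(μ.prod μ)) ^ ((2:ℝ)⁻¹) * (∫⁻ p, Φ₂ p ∂(μ.prod μ)) ^ ((2:ℝ)⁻¹) := hCS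
    _ ≤ A * If ^ (1/γ) * Ig ^ (1/γ) := hfinal

/-- From a bilinear bound against all test functions, deduce the dual norm bound,
via truncation and monotone convergence. -/
private lemma dual_bound {γ γ' : ℝ} (hγ1 : 1 < γ) (hγ'1 : 1 < γ')
    (hconj : 1/γ + 1/γ' = 1)
    {T : X → ℝ≥0∞} (hT : Measurable T) {C : ℝ≥0∞}
    (hbil : ∀ G : X → ℝ≥0∞, Measurable G →
      ∫⁻ x, G x * T x ∂μ ≤ C * (∫⁻ x, G x ^ γ ∂μ) ^ (1/γ))
    (S : ℕ → Set X) (hS : ∀ n, MeasurableSet (S n)) (hSfin : ∀ n, μ (S n) < ⊤)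
    (hSmono : Monotone S) (hSall : ∀ x, ∃ n, x ∈ S n) :
    (∫⁻ x, T x ^ γ' ∂μ) ^ (1/γ') ≤ C := by
  have hγ0 : 0 < γ := lt_trans one_pos hγ1
  have hγ'0 : 0 < γ' := lt_trans one_pos hγ'1
  have hγne : γ ≠ 0 := ne_of_gt hγ0
  have hγ'ne : γ' ≠ 0 := ne_of_gt hγ'0
  have hkey : (γ' - 1) * γ = γ' := by
    field_simp at hconj
    nlinarith [hconj]
  have main : ∀ n : ℕ,
      (∫⁻ x, (S n).indicator (fun x => min (T x) n ^ γ') x ∂μ) ≤ C ^ γ' := by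
    intro n
    set I := ∫⁻ x, (S n).indicator (fun x => min (T x) n ^ γ') x ∂μ with hI
    have hIfin : I < ⊤ := by
      have hle : I ≤ (n : ℝ≥0∞) ^ γ' * μ (S n) := by
        rw [hI]
        calc ∫⁻ x, (S n).indicator (fun x => min (T x) n ^ γ') x ∂μ
            ≤ ∫⁻ x, (S n).indicator (fun _ => (n : ℝ≥0∞) ^ γ') x ∂μ := by
              refine lintegral_mono fun x => ?_
              by_cases hx : x ∈ S n
              · rw [Set.indicator_of_mem hx, Set.indicator_of_mem hx]
                exact ENNReal.rpow_le_rpow (min_le_right _ _) (le_of_lt hγ'0)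
              · rw [Set.indicator_of_notMem hx, Set.indicator_of_notMem hx]
          _ = (n : ℝ≥0∞) ^ γ' * μ (S n) := by
              rw [lintegral_indicator (hS n), setLIntegral_const]
      exact lt_of_le_of_lt hle (ENNReal.mul_lt_top
        (ENNReal.rpow_ne_top_of_nonneg (le_of_lt hγ'0) (ENNReal.natCast_ne_top n)).lt_top
        (hSfin n))
    have hmeas : Measurable fun x => (S n).indicator (fun x => min (T x) n ^ (γ' - 1)) x :=
      (meas_rpow (hT.min measurable_const) _).indicator (hS n)
    have hGpow : (∫⁻ x, ((S n).indicator (fun x => min (T x) n ^ (γ' - 1)) x) ^ γ ∂μ) = I := by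
      rw [hI]
      refine lintegral_congr fun x => ?_
      by_cases hx : x ∈ S n
      · rw [Set.indicator_of_mem hx, Set.indicator_of_mem hx, ← ENNReal.rpow_mul, hkey]
      · rw [Set.indicator_of_notMem hx, Set.indicator_of_notMem hx,
          ENNReal.zero_rpow_of_pos hγ0]
    have hlow : I ≤ ∫⁻ x, ((S n).indicator (fun x => min (T x) n ^ (γ' - 1)) x) * T x ∂μ := by
      rw [hI]
      refine lintegral_mono fun x => ?_
      by_cases hx : x ∈ S n
      · rw [Set.indicator_of_mem hx, Set.indicator_of_mem hx]
        have hsplit : min (T x) n ^ (γ' - 1) * min (T x) n ^ (1:ℝ) = min (T x) n ^ γ' := by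
          rw [← ENNReal.rpow_add_of_nonneg _ _ (by linarith) zero_le_one]
          norm_num
        rw [ENNReal.rpow_one] at hsplit
        calc min (T x) (n : ℝ≥0∞) ^ γ' = min (T x) n ^ (γ' - 1) * min (T x) n := hsplit.symm
          _ ≤ min (T x) n ^ (γ' - 1) * T x := mul_le_mul_right (min_le_left _ _) _
      · rw [Set.indicator_of_notMem hx, Set.indicator_of_notMem hx, zero_mul]
    have hchain : I ≤ C * I ^ (1/γ) := by
      calc I ≤ ∫⁻ x, ((S n).indicator (fun x => min (T x) n ^ (γ' - 1)) x) * T x ∂μ := hlow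
        _ ≤ C * (∫⁻ x, ((S n).indicator (fun x => min (T x) n ^ (γ' - 1)) x) ^ γ ∂μ) ^ (1/γ) :=
            hbil _ hmeas
        _ = C * I ^ (1/γ) := by rw [hGpow]
    rcases eq_or_ne I 0 with h0 | h0
    · rw [h0]; exact zero_le
    · have hne_top : I ^ (1/γ) ≠ ⊤ :=
        ENNReal.rpow_ne_top_of_nonneg (by positivity) hIfin.ne
      have hne_zero : I ^ (1/γ) ≠ 0 := by
        rw [Ne, ENNReal.rpow_eq_zero_iff]
        push_neg
        constructor
        · intro h; exact absurd h h0
        · intro h; exact absurd h hIfin.ne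
      have hsum1 : 1/γ' + 1/γ = 1 := by linarith
      have hid : I ^ (1/γ') * I ^ (1/γ) = I := by
        rw [← ENNReal.rpow_add_of_nonneg _ _ (by positivity) (by positivity), hsum1,
          ENNReal.rpow_one]
      have hlast : I ^ (1/γ') * I ^ (1/γ) ≤ C * I ^ (1/γ) := by rw [hid]; exact hchain
      have hIC : I ^ (1/γ') ≤ C := (ENNReal.mul_le_mul_iff_left hne_zero hne_top).mp hlast
      calc I = (I ^ (1/γ')) ^ γ' := by
            rw [← ENNReal.rpow_mul, one_div, inv_mul_cancel₀ hγ'ne, ENNReal.rpow_one]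
        _ ≤ C ^ γ' := ENNReal.rpow_le_rpow hIC (le_of_lt hγ'0)
  have hmono : Monotone fun n : ℕ => fun x => (S n).indicator (fun x => min (T x) n ^ γ') x := by
    intro m n hmn x
    simp only
    by_cases hx : x ∈ S m
    · rw [Set.indicator_of_mem hx, Set.indicator_of_mem (hSmono hmn hx)]
      exact ENNReal.rpow_le_rpow (min_le_min le_rfl (Nat.cast_le.mpr hmn)) (le_of_lt hγ'0)
    · rw [Set.indicator_of_notMem hx]; exact zero_le
  have hmeas' : ∀ n : ℕ, Measurable fun x => (S n).indicator (fun x => min (T x) n ^ γ') x :=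
    fun n => (meas_rpow (hT.min measurable_const) _).indicator (hS n)
  have hsup : ∀ x, (⨆ n : ℕ, (S n).indicator (fun x => min (T x) n ^ γ') x) = T x ^ γ' := by
    intro x
    obtain ⟨n₀, hn₀⟩ := hSall x
    apply le_antisymm
    · refine iSup_le fun n => ?_
      by_cases hx : x ∈ S n
      · rw [Set.indicator_of_mem hx]
        exact ENNReal.rpow_le_rpow (min_le_left _ _) (le_of_lt hγ'0)
      · rw [Set.indicator_of_notMem hx]; exact zero_le
    · rcases eq_or_ne (T x) ⊤ with htop | hne
      · rw [htop, ENNReal.top_rpow_of_pos hγ'0, ← ENNReal.iSup_natCast]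
        refine iSup_mono' fun n => ⟨max (n+1) n₀, ?_⟩
        have hxm : x ∈ S (max (n+1) n₀) := hSmono (le_max_right _ _) hn₀
        rw [Set.indicator_of_mem hxm]
        have hmin : min (T x) ((max (n+1) n₀ : ℕ) : ℝ≥0∞) = ((max (n+1) n₀ : ℕ) : ℝ≥0∞) := by
          rw [htop]; exact min_eq_right le_top
        rw [hmin]
        have h1n : (1:ℕ) ≤ max (n+1) n₀ := le_trans (Nat.succ_le_succ (Nat.zero_le _))
          (le_max_left _ _)
        calc (n : ℝ≥0∞) ≤ ((max (n+1) n₀ : ℕ) : ℝ≥0∞) :=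
              Nat.cast_le.mpr (le_trans (Nat.le_succ n) (le_max_left _ _))
          _ ≤ ((max (n+1) n₀ : ℕ) : ℝ≥0∞) ^ γ' :=
              ENNReal.le_rpow_self_of_one_le (by exact_mod_cast h1n) (le_of_lt hγ'1)
      · obtain ⟨m, hm⟩ := ENNReal.exists_nat_gt hne
        have hxm : x ∈ S (max m n₀) := hSmono (le_max_right _ _) hn₀
        refine le_trans (le_of_eq ?_) (le_iSup _ (max m n₀))
        rw [Set.indicator_of_mem hxm,
          min_eq_left (le_trans hm.le (Nat.cast_le.mpr (le_max_left _ _)))]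
  have hfinal : (∫⁻ x, T x ^ γ' ∂μ)
      = ⨆ n : ℕ, ∫⁻ x, (S n).indicator (fun x => min (T x) n ^ γ') x ∂μ := by
    rw [← lintegral_iSup hmeas' hmono]
    exact lintegral_congr fun x => (hsup x).symm
  rw [hfinal]
  calc (⨆ n : ℕ, ∫⁻ x, (S n).indicator (fun x => min (T x) n ^ γ') x ∂μ) ^ (1/γ')
      ≤ (C ^ γ') ^ (1/γ') := ENNReal.rpow_le_rpow (iSup_le main) (by positivity)
    _ = C := by
        rw [← ENNReal.rpow_mul, mul_one_div, div_self hγ'ne, ENNReal.rpow_one]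

end Aux

/-- Bilinear bound for symmetric integral kernels: with
`1/γ₁ = 1 − (1/2)(1/α₁ + 1/β₁)` one has
`∫ |g| K(|f|) ≤ ‖k‖_{L_x^{β₁}L_y^{α₁}} ‖f‖_{γ₁} ‖g‖_{γ₁}` and
`‖K(|f|)‖_{γ₁'} ≤ ‖k‖_{L_x^{β₁}L_y^{α₁}} ‖f‖_{γ₁}`. -/
theorem symmetric_kernel_bilinear_bound (N : ℕ) (hN : 1 ≤ N)
    (α₁ β₁ γ₁ γ₁' : ℝ)
    (hα₁ : 1 ≤ α₁) (hβ₁ : 1 ≤ β₁) (hαβ : α₁ ≤ β₁)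
    (hsum : 1 / α₁ + 1 / β₁ ≤ 4 / N)
    (hγdef : 1 / γ₁ = 1 - (1 / α₁ + 1 / β₁) / 2) (hγ₁ : 1 ≤ γ₁)
    (hconj : 1 / γ₁ + 1 / γ₁' = 1)
    (k : EuclideanSpace ℝ (Fin N) → EuclideanSpace ℝ (Fin N) → ℝ)
    (hk : Measurable fun q : EuclideanSpace ℝ (Fin N) × EuclideanSpace ℝ (Fin N) => k q.1 q.2)
    (hsymm : ∀ x y, k x y = k y x)
    (hA : (∫⁻ x, (∫⁻ y, ENNReal.ofReal |k x y| ^ α₁) ^ (β₁ / α₁)) ^ (1 / β₁) < ⊤)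
    (f g : EuclideanSpace ℝ (Fin N) → ℝ) (hf : Measurable f) (hg : Measurable g)
    (hfL : (∫⁻ x, ENNReal.ofReal |f x| ^ γ₁) < ⊤)
    (hgL : (∫⁻ x, ENNReal.ofReal |g x| ^ γ₁) < ⊤) :
    (∫⁻ x, ENNReal.ofReal |g x| * ∫⁻ y, ENNReal.ofReal (|k x y| * |f y|)) ≤
        (∫⁻ x, (∫⁻ y, ENNReal.ofReal |k x y| ^ α₁) ^ (β₁ / α₁)) ^ (1 / β₁) *
          (∫⁻ x, ENNReal.ofReal |f x| ^ γ₁) ^ (1 / γ₁) *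
          (∫⁻ x, ENNReal.ofReal |g x| ^ γ₁) ^ (1 / γ₁) ∧
      (∫⁻ x, (∫⁻ y, ENNReal.ofReal (|k x y| * |f y|)) ^ γ₁') ^ (1 / γ₁') ≤
        (∫⁻ x, (∫⁻ y, ENNReal.ofReal |k x y| ^ α₁) ^ (β₁ / α₁)) ^ (1 / β₁) *
          (∫⁻ x, ENNReal.ofReal |f x| ^ γ₁) ^ (1 / γ₁) := by
  classical
  have hα0 : 0 < α₁ := lt_of_lt_of_le one_pos hα₁
  have hβ0 : 0 < β₁ := lt_of_lt_of_le one_pos hβ₁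
  have hγ0 : 0 < γ₁ := lt_of_lt_of_le one_pos hγ₁
  have hγinv_pos : 0 < 1 / γ₁ := by positivity
  have hβgt : 1 < β₁ := by
    rcases lt_or_eq_of_le hβ₁ with h | h
    · exact h
    · exfalso
      have hαeq : α₁ = 1 := le_antisymm (h ▸ hαβ) hα₁
      have h1 : 1 / γ₁ = 0 := by rw [hγdef, hαeq, ← h]; norm_num
      linarith
  have hsum_pos : 0 < 1 / α₁ + 1 / β₁ := by positivity
  have hγinv_lt : 1 / γ₁ < 1 := by rw [hγdef]; linarith
  have hγ'inv : 1 / γ₁' = 1 - 1 / γ₁ := by linarith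
  have hγ'invpos : 0 < 1 / γ₁' := by rw [hγ'inv]; linarith
  have hγ'0 : 0 < γ₁' := one_div_pos.mp hγ'invpos
  have hγ'gt : 1 < γ₁' := by
    have h1 : 1 / γ₁' < 1 := by rw [hγ'inv]; linarith
    rw [div_lt_one hγ'0] at h1
    exact h1
  have hγgt : 1 < γ₁ := by
    rw [div_lt_one hγ0] at hγinv_lt
    exact hγinv_lt
  -- notation
  have hKm : Measurable fun p : EuclideanSpace ℝ (Fin N) × EuclideanSpace ℝ (Fin N) =>
      ENNReal.ofReal |k p.1 p.2| := ENNReal.measurable_ofReal.comp hk.abs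
  have hFm : Measurable fun y => ENNReal.ofReal |f y| :=
    ENNReal.measurable_ofReal.comp hf.abs
  have hGm : Measurable fun y => ENNReal.ofReal |g y| :=
    ENNReal.measurable_ofReal.comp hg.abs
  have hKsymm : ∀ x y, ENNReal.ofReal |k x y| = ENNReal.ofReal |k y x| := fun x y => by
    rw [hsymm x y]
  have hmul : ∀ x y, ENNReal.ofReal (|k x y| * |f y|)
      = ENNReal.ofReal |k x y| * ENNReal.ofReal |f y| := fun x y =>
    ENNReal.ofReal_mul (abs_nonneg _)
  have part1 : (∫⁻ x, ENNReal.ofReal |g x| * ∫⁻ y, ENNReal.ofReal (|k x y| * |f y|)) ≤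
      (∫⁻ x, (∫⁻ y, ENNReal.ofReal |k x y| ^ α₁) ^ (β₁ / α₁)) ^ (1 / β₁) *
        (∫⁻ x, ENNReal.ofReal |f x| ^ γ₁) ^ (1 / γ₁) *
        (∫⁻ x, ENNReal.ofReal |g x| ^ γ₁) ^ (1 / γ₁) := by
    simp_rw [hmul]
    exact bilinear_bound (μ := volume) hα₁ hβgt hγ0 hγdef hKm hKsymm hFm hGm
  refine ⟨part1, ?_⟩
  -- part 2 via duality/truncation
  simp_rw [hmul]
  set T : EuclideanSpace ℝ (Fin N) → ℝ≥0∞ :=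
    fun x => ∫⁻ y, ENNReal.ofReal |k x y| * ENNReal.ofReal |f y| with hTdef
  have hTm : Measurable T := by
    have : Measurable fun p : EuclideanSpace ℝ (Fin N) × EuclideanSpace ℝ (Fin N) =>
        ENNReal.ofReal |k p.1 p.2| * ENNReal.ofReal |f p.2| :=
      hKm.mul (hFm.comp measurable_snd)
    exact this.lintegral_prod_right'
  set C := (∫⁻ x, (∫⁻ y, ENNReal.ofReal |k x y| ^ α₁) ^ (β₁ / α₁)) ^ (1 / β₁) *
    (∫⁻ x, ENNReal.ofReal |f x| ^ γ₁) ^ (1 / γ₁) with hCdef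
  have hbil : ∀ G : EuclideanSpace ℝ (Fin N) → ℝ≥0∞, Measurable G →
      ∫⁻ x, G x * T x ≤ C * (∫⁻ x, G x ^ γ₁) ^ (1 / γ₁) := by
    intro G hGm'
    have h := bilinear_bound (μ := volume) hα₁ hβgt hγ0 hγdef hKm hKsymm hFm hGm'
    rw [hCdef, hTdef]
    calc ∫⁻ x, G x * ∫⁻ y, ENNReal.ofReal |k x y| * ENNReal.ofReal |f y|
        ≤ (∫⁻ x, (∫⁻ y, ENNReal.ofReal |k x y| ^ α₁) ^ (β₁ / α₁)) ^ (1 / β₁) *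
          (∫⁻ x, ENNReal.ofReal |f x| ^ γ₁) ^ (1 / γ₁) * (∫⁻ x, G x ^ γ₁) ^ (1 / γ₁) := h
      _ = _ := by rw [mul_assoc]
  have hconj' : 1 / γ₁ + 1 / γ₁' = 1 := hconj
  exact dual_bound (μ := volume) hγgt hγ'gt hconj' hTm hbil
    (fun n => Metric.closedBall (0 : EuclideanSpace ℝ (Fin N)) n)
    (fun n => measurableSet_closedBall)
    (fun n => measure_closedBall_lt_top)
    (fun m n hmn => Metric.closedBall_subset_closedBall (Nat.cast_le.mpr hmn))
    (fun x => by
      obtain ⟨n, hn⟩ := exists_nat_ge ‖x‖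
      exact ⟨n, by simpa [Metric.mem_closedBall, dist_zero_right] using hn⟩)
end

section
/- Let p > 2 be a real number and set r := min(2, p/2), so r ∈ (1, p). Then there exists a constant C > 0 depending only on p such that for all complex numbers u and v, | |u+v|^p − |u|^p − p |u|^{p−2} Re(u · conj(v)) | ≤ C ( |u|^{p−r} |v|^{r} + |v|^p ), with the convention that |u|^{p−2} Re(u · conj(v)) = 0 when u = 0. -/
open Real Complex

set_option maxHeartbeats 1000000 in

lemma taylor_aux (p a b c : ℝ) (hp : 2 < p) (ha : 0 < a) (hb : |b| ≤ a * c)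
    (hc : 0 ≤ c) (hca : c ≤ a / 2) :
    |(a^2 + 2*b + c^2) ^ (p/2) - (a^2) ^ (p/2) - p * b * (a^2) ^ (p/2-1)| ≤
      p^2 * c^2 * ((3/2*a)^2) ^ (p/2-1) := by
  have hb' : -(a*c) ≤ b ∧ b ≤ a*c := abs_le.mp hb
  set q : ℝ → ℝ := fun t => a^2 + 2*b*t + c^2*t^2 with hqdef
  have hqlb : ∀ t ∈ Set.Icc (0:ℝ) 1, (a/2)^2 ≤ q t := by
    rintro t ⟨ht0, ht1⟩
    have htc : t*c ≤ c := mul_le_of_le_one_left hc ht1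
    have h1 : a/2 ≤ a - t*c := by linarith
    have h2 : (a/2)^2 ≤ (a - t*c)^2 := pow_le_pow_left₀ (by positivity) h1 2
    have hba : (0:ℝ) ≤ b + a*c := by linarith [hb'.1]
    show (a/2)^2 ≤ a^2 + 2*b*t + c^2*t^2
    nlinarith [mul_nonneg ht0 hba, h2]
  have hqub : ∀ t ∈ Set.Icc (0:ℝ) 1, q t ≤ (3/2*a)^2 := by
    rintro t ⟨ht0, ht1⟩
    have htc : t*c ≤ c := mul_le_of_le_one_left hc ht1
    have hba : (0:ℝ) ≤ a*c - b := by linarith [hb'.2]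
    have ht1' : t^2 ≤ 1 := by nlinarith
    have ht2 : t^2*c^2 ≤ c^2 := by nlinarith [sq_nonneg c]
    show a^2 + 2*b*t + c^2*t^2 ≤ (3/2*a)^2
    nlinarith [mul_nonneg ht0 hba, mul_nonneg hc ht0]
  have hqpos : ∀ t ∈ Set.Icc (0:ℝ) 1, 0 < q t := fun t ht =>
    lt_of_lt_of_le (by positivity) (hqlb t ht)
  have hq' : ∀ t : ℝ, HasDerivAt q (2*b + 2*c^2*t) t := by
    intro t
    have h1 : HasDerivAt (fun t : ℝ => a^2 + 2*b*t + c^2*t^2)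
        (0 + 2*b*1 + c^2*(↑(2:ℕ)*t^(2-1))) t :=
      (((hasDerivAt_const t (a^2)).add (((hasDerivAt_id t).const_mul (2*b)))).add
        (((hasDerivAt_pow 2 t)).const_mul (c^2)))
    convert h1 using 1
    push_cast; ring
  set f : ℝ → ℝ := fun t => q t ^ (p/2) with hfdef
  set f' : ℝ → ℝ := fun t => (2*b + 2*c^2*t) * (p/2) * q t ^ (p/2 - 1) with hf'def
  have hf : ∀ t ∈ Set.Icc (0:ℝ) 1, HasDerivAt f (f' t) t := by
    intro t ht
    exact (hq' t).rpow_const (Or.inl (ne_of_gt (hqpos t ht)))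
  set f'' : ℝ → ℝ := fun t =>
    2*c^2 * (p/2) * q t ^ (p/2-1) +
    (2*b + 2*c^2*t) * (p/2) * ((2*b + 2*c^2*t) * (p/2-1) * q t ^ (p/2-2)) with hf''def
  have hf' : ∀ t ∈ Set.Icc (0:ℝ) 1, HasDerivAt f' (f'' t) t := by
    intro t ht
    have h1 : HasDerivAt (fun t : ℝ => (2*b + 2*c^2*t) * (p/2)) (2*c^2 * (p/2)) t := by
      have h0 : HasDerivAt (fun t : ℝ => 2*b + 2*c^2*t) (0 + 2*c^2*1) t :=
        (hasDerivAt_const t (2*b)).add ((hasDerivAt_id t).const_mul (2*c^2))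
      simpa using h0.mul_const (p/2)
    have h2 : HasDerivAt (fun t => q t ^ (p/2-1))
        ((2*b + 2*c^2*t) * (p/2-1) * q t ^ ((p/2-1) - 1)) t :=
      (hq' t).rpow_const (Or.inl (ne_of_gt (hqpos t ht)))
    have h3 := h1.mul h2
    have he : (p/2-1) - 1 = p/2 - 2 := by ring
    rw [he] at h3
    exact h3
  set M : ℝ := p^2 * c^2 * ((3/2*a)^2) ^ (p/2-1) with hMdef
  have hMnn : 0 ≤ M := by positivity
  have hbound : ∀ t ∈ Set.Icc (0:ℝ) 1, |f'' t| ≤ M := by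
    intro t ht
    have hq0 := hqpos t ht
    have hqu := hqub t ht
    have hdisc : (b + c^2*t)^2 ≤ q t * c^2 := by
      show (b + c^2*t)^2 ≤ (a^2 + 2*b*t + c^2*t^2) * c^2
      nlinarith [hb'.1, hb'.2, sq_nonneg (b*t*c - c*a), sq_nonneg (b*t - a), sq_nonneg (b - a*c), sq_nonneg (b + a*c)]
    have hrw : q t ^ (p/2 - 2) * q t = q t ^ (p/2-1) := by
      nth_rewrite 2 [← Real.rpow_one (q t)]
      rw [← Real.rpow_add hq0]
      congr 1; ring
    have hqp1 : q t ^ (p/2-1) ≤ ((3/2*a)^2) ^ (p/2-1) :=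
      Real.rpow_le_rpow hq0.le hqu (by linarith)
    have hqp1nn : (0:ℝ) ≤ q t ^ (p/2-1) := Real.rpow_nonneg hq0.le _
    have hqp2nn : (0:ℝ) ≤ q t ^ (p/2-2) := Real.rpow_nonneg hq0.le _
    have key : |f'' t| ≤ p * c^2 * q t ^ (p/2-1)
        + (p/2)*(p/2-1) * ((2*b+2*c^2*t)^2 * q t ^ (p/2-2)) := by
      simp only [hf''def]
      refine (abs_add_le _ _).trans ?_
      have e1 : |2*c^2 * (p/2) * q t ^ (p/2-1)| = p * c^2 * q t ^ (p/2-1) := by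
        rw [_root_.abs_of_nonneg (by positivity)]; ring
      have e2 : |(2*b + 2*c^2*t) * (p/2) * ((2*b + 2*c^2*t) * (p/2-1) * q t ^ (p/2-2))|
          = (p/2)*(p/2-1) * ((2*b+2*c^2*t)^2 * q t ^ (p/2-2)) := by
        have e3 : (2*b + 2*c^2*t) * (p/2) * ((2*b + 2*c^2*t) * (p/2-1) * q t ^ (p/2-2))
            = (p/2)*(p/2-1) * ((2*b+2*c^2*t)^2 * q t ^ (p/2-2)) := by ring
        rw [e3, _root_.abs_of_nonneg]
        have : (0:ℝ) ≤ p/2-1 := by linarith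
        positivity
      rw [e1, e2]
    have hsq : (2*b+2*c^2*t)^2 * q t ^ (p/2-2) ≤ 4 * c^2 * q t ^ (p/2-1) := by
      have h1 : (2*b+2*c^2*t)^2 ≤ 4 * (q t * c^2) := by nlinarith [hdisc]
      calc (2*b+2*c^2*t)^2 * q t ^ (p/2-2) ≤ 4 * (q t * c^2) * q t ^ (p/2-2) :=
            mul_le_mul_of_nonneg_right h1 hqp2nn
        _ = 4 * c^2 * (q t ^ (p/2-2) * q t) := by ring
        _ = 4 * c^2 * q t ^ (p/2-1) := by rw [hrw]
    have hple : |f'' t| ≤ (p^2 * c^2) * q t ^ (p/2-1) := by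
      refine key.trans ?_
      have hpp : (0:ℝ) ≤ (p/2)*(p/2-1) := by nlinarith
      have h2 : (p/2)*(p/2-1) * ((2*b+2*c^2*t)^2 * q t ^ (p/2-2))
          ≤ (p/2)*(p/2-1) * (4 * c^2 * q t ^ (p/2-1)) :=
        mul_le_mul_of_nonneg_left hsq hpp
      have h4 : (0:ℝ) ≤ p * (c^2 * q t ^ (p/2-1)) :=
        mul_nonneg (by linarith) (mul_nonneg (sq_nonneg c) hqp1nn)
      nlinarith [h2, h4]
    refine hple.trans ?_
    simp only [hMdef]
    exact mul_le_mul_of_nonneg_left hqp1 (by positivity)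
  -- mean value theorem, twice
  have hcvx : Convex ℝ (Set.Icc (0:ℝ) 1) := convex_Icc 0 1
  have h0mem : (0:ℝ) ∈ Set.Icc (0:ℝ) 1 := by norm_num
  have h1mem : (1:ℝ) ∈ Set.Icc (0:ℝ) 1 := by norm_num
  have mvt1 : ∀ t ∈ Set.Icc (0:ℝ) 1, |f' t - f' 0| ≤ M := by
    intro t ht
    have h := Convex.norm_image_sub_le_of_norm_hasDerivWithin_le
      (fun s hs => (hf' s hs).hasDerivWithinAt) (fun s hs => hbound s hs) hcvx h0mem ht
    rw [Real.norm_eq_abs] at h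
    refine h.trans ?_
    have hn : ‖t - (0:ℝ)‖ ≤ 1 := by
      rw [Real.norm_eq_abs, sub_zero, _root_.abs_of_nonneg ht.1]; exact ht.2
    calc M * ‖t - (0:ℝ)‖ ≤ M * 1 := mul_le_mul_of_nonneg_left hn hMnn
      _ = M := mul_one M
  set g : ℝ → ℝ := fun t => f t - t * f' 0 with hgdef
  have hg : ∀ t ∈ Set.Icc (0:ℝ) 1, HasDerivAt g (f' t - f' 0) t := by
    intro t ht
    have h1 : HasDerivAt (fun t : ℝ => t * f' 0) (f' 0) t := by
      simpa using (hasDerivAt_id t).mul_const (f' 0)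
    exact (hf t ht).sub h1
  have mvt2 : |g 1 - g 0| ≤ M := by
    have h := Convex.norm_image_sub_le_of_norm_hasDerivWithin_le
      (fun s hs => (hg s hs).hasDerivWithinAt) (fun s hs => mvt1 s hs) hcvx h0mem h1mem
    rw [Real.norm_eq_abs] at h
    simpa using h
  have e0 : q 0 = a^2 := by show a^2 + 2*b*0 + c^2*0^2 = a^2; ring
  have e1 : q 1 = a^2 + 2*b + c^2 := by show a^2 + 2*b*1 + c^2*1^2 = a^2 + 2*b + c^2; ring
  have hg10 : g 1 - g 0 = (a^2 + 2*b + c^2) ^ (p/2) - (a^2) ^ (p/2) - p * b * (a^2) ^ (p/2-1) := by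
    simp only [hgdef, hfdef, hf'def, e0, e1]
    ring
  rw [hg10] at mvt2
  exact mvt2

/-- Second-order Taylor-type pointwise expansion of `z ↦ |z|^p` on `ℂ`, `p > 2`,
with error `C(|u|^{p−r}|v|^r + |v|^p)` where `r = min(2, p/2)`. -/
theorem abs_pow_taylor_expansion (p : ℝ) (hp : 2 < p) :
    ∃ C > 0, ∀ u v : ℂ,
      |‖u + v‖ ^ p - ‖u‖ ^ p - p * ‖u‖ ^ (p - 2) * (u * (starRingEnd ℂ) v).re| ≤
        C * (‖u‖ ^ (p - min 2 (p / 2)) * ‖v‖ ^ (min 2 (p / 2)) + ‖v‖ ^ p) := by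
  set r : ℝ := min 2 (p/2) with hrdef
  have hr2 : r ≤ 2 := min_le_left _ _
  have hr1 : 1 < r := lt_min (by norm_num) (by linarith)
  have hrp : r < p := lt_of_le_of_lt hr2 hp
  have hp0 : 0 < p := by linarith
  refine ⟨3^p + 2^p + p*2^p + p^2*(3/2)^(p-2), by positivity, ?_⟩
  intro u v
  set C : ℝ := 3^p + 2^p + p*2^p + p^2*(3/2)^(p-2) with hCdef
  have hCpos : 0 < C := by positivity
  set a : ℝ := ‖u‖ with hadef
  set c : ℝ := ‖v‖ with hcdef
  set b : ℝ := (u * (starRingEnd ℂ) v).re with hbdef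
  have ha0 : 0 ≤ a := norm_nonneg u
  have hc0 : 0 ≤ c := norm_nonneg v
  have hb : |b| ≤ a * c := by
    calc |b| ≤ ‖u * (starRingEnd ℂ) v‖ := Complex.abs_re_le_norm _
      _ = a * c := by
          rw [norm_mul, RCLike.norm_conj]
  have hrne : r ≠ 0 := by intro h; rw [h] at hr1; linarith
  have hpne : p ≠ 0 := by intro h; rw [h] at hp; linarith
  have hsum : ‖u + v‖^2 = a^2 + 2*b + c^2 := by
    rw [hadef, hcdef, hbdef]
    rw [Complex.sq_norm, Complex.sq_norm, Complex.sq_norm, Complex.normSq_add]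
    ring
  have hxp : ∀ x : ℝ, 0 ≤ x → (x^2 : ℝ) ^ (p/2) = x ^ p := by
    intro x hx
    rw [← Real.rpow_natCast x 2, ← Real.rpow_mul hx]
    congr 1; push_cast; ring
  have hxp2 : ∀ x : ℝ, 0 ≤ x → (x^2 : ℝ) ^ (p/2-1) = x ^ (p-2) := by
    intro x hx
    rw [← Real.rpow_natCast x 2, ← Real.rpow_mul hx]
    congr 1
    push_cast; ring
  have hRHSnn : 0 ≤ a ^ (p - r) * c ^ r + c ^ p := by positivity
  by_cases hcase : c ≤ a/2
  · -- Taylor regime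
    rcases eq_or_lt_of_le ha0 with ha | ha
    · -- a = 0, hence c = 0, everything vanishes
      have hc : c = 0 := le_antisymm (by linarith) hc0
      have hb0 : b = 0 := by
        have h1 : |b| ≤ 0 := by rw [← ha] at hb; linarith [hb]
        exact abs_nonpos_iff.mp h1
      have huv : ‖u + v‖ = 0 := by
        have h1 : ‖u + v‖ ≤ a + c := norm_add_le u v
        have h2 : a + c = 0 := by rw [← ha, hc]; ring
        exact le_antisymm (by linarith) (norm_nonneg _)
      rw [huv, ← ha, hc, hb0]
      rw [Real.zero_rpow hpne, Real.zero_rpow hrne]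
      simp
    · have key := taylor_aux p a b c hp ha hb hc0 hcase
      have e1 : (a^2 + 2*b + c^2) ^ (p/2) = ‖u + v‖ ^ p := by
        rw [← hsum, hxp _ (norm_nonneg _)]
      have e2 : (a^2 : ℝ) ^ (p/2) = a ^ p := hxp a ha0
      have e3 : p * b * (a^2) ^ (p/2-1) = p * a ^ (p-2) * b := by
        rw [hxp2 a ha0]; ring
      rw [e1, e2, e3] at key
      refine key.trans ?_
      -- p^2 c^2 ((3/2 a)^2)^(p/2-1) = p^2 (3/2)^(p-2) a^(p-2) c^2
      have e4 : ((3/2*a)^2 : ℝ) ^ (p/2-1) = (3/2 : ℝ)^(p-2) * a^(p-2) := by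
        rw [hxp2 (3/2*a) (by positivity), Real.mul_rpow (by norm_num) ha0]
      rw [e4]
      have hc2 : a ^ (p-2) * c^2 ≤ a ^ (p-r) * c ^ r := by
        rcases eq_or_lt_of_le hc0 with hc' | hc'
        · rw [← hc', Real.zero_rpow hrne]
          norm_num
        · have hca' : c ≤ a := by linarith
          have ec : (c^2 : ℝ) = c ^ r * c ^ (2 - r) := by
            rw [← Real.rpow_add hc' r (2-r)]
            rw [← Real.rpow_natCast c 2]
            congr 1; push_cast; ring
          have eca : c ^ (2-r) ≤ a ^ (2-r) :=
            Real.rpow_le_rpow hc0 hca' (by linarith)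
          have ea : a ^ (p-2) * a ^ (2-r) = a ^ (p-r) := by
            rw [← Real.rpow_add ha]; congr 1; ring
          calc a ^ (p-2) * c^2 = a ^ (p-2) * c ^ (2-r) * c ^ r := by rw [ec]; ring
            _ ≤ a ^ (p-2) * a ^ (2-r) * c ^ r := by
                have := mul_le_mul_of_nonneg_left eca (Real.rpow_nonneg ha0 (p-2))
                exact mul_le_mul_of_nonneg_right this (Real.rpow_nonneg hc0 r)
            _ = a ^ (p-r) * c ^ r := by rw [ea]
      have hKC : p^2 * (3/2:ℝ)^(p-2) ≤ C := by
        have h1 : (0:ℝ) < 3^p := by positivity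
        have h2 : (0:ℝ) < 2^p := by positivity
        have h3 : (0:ℝ) < p*2^p := by positivity
        simp only [hCdef]; linarith
      have hcp : 0 ≤ c ^ p := Real.rpow_nonneg hc0 p
      have harcr : 0 ≤ a ^ (p-r) * c ^ r := by positivity
      calc p^2 * c^2 * ((3/2:ℝ)^(p-2) * a^(p-2))
          = (p^2 * (3/2:ℝ)^(p-2)) * (a^(p-2) * c^2) := by ring
        _ ≤ C * (a ^ (p-r) * c ^ r) := by
            apply mul_le_mul hKC hc2 (by positivity) hCpos.le
        _ ≤ C * (a ^ (p-r) * c ^ r + c ^ p) := by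
            rw [mul_add]; linarith [mul_nonneg hCpos.le hcp]
  · -- large-v regime
    push_neg at hcase
    have hcpos : 0 < c := lt_of_le_of_lt (by positivity) hcase
    have ha2c : a ≤ 2*c := by linarith
    have hXnn : 0 ≤ ‖u+v‖ ^ p := Real.rpow_nonneg (norm_nonneg _) p
    have hYnn : 0 ≤ a ^ p := Real.rpow_nonneg ha0 p
    have hZnn : 0 ≤ p * a ^ (p-2) := by positivity
    have htri : |‖u + v‖ ^ p - a ^ p - p * a ^ (p-2) * b| ≤
        ‖u+v‖ ^ p + a ^ p + p * a ^ (p-2) * |b| := by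
      rw [abs_le]
      have h1 : p * a ^ (p-2) * b ≤ p * a ^ (p-2) * |b| :=
        mul_le_mul_of_nonneg_left (le_abs_self b) hZnn
      have h2 : -(p * a ^ (p-2) * |b|) ≤ p * a ^ (p-2) * b := by
        have := mul_le_mul_of_nonneg_left (neg_abs_le b) hZnn
        linarith [this]
      constructor <;> linarith [h1, h2]
    refine htri.trans ?_
    have hcp : 0 ≤ c ^ p := Real.rpow_nonneg hc0 p
    have hX : ‖u+v‖ ^ p ≤ 3^p * c ^ p := by
      have h1 : ‖u + v‖ ≤ 3 * c := by
        calc ‖u + v‖ ≤ a + c := norm_add_le u v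
          _ ≤ 3 * c := by linarith
      calc ‖u+v‖ ^ p ≤ (3*c) ^ p := Real.rpow_le_rpow (norm_nonneg _) h1 hp0.le
        _ = 3^p * c^p := Real.mul_rpow (by norm_num) hc0
    have hY : a ^ p ≤ 2^p * c ^ p := by
      calc a ^ p ≤ (2*c) ^ p := Real.rpow_le_rpow ha0 ha2c hp0.le
        _ = 2^p * c^p := Real.mul_rpow (by norm_num) hc0
    have hZ : a ^ (p-2) * |b| ≤ 2^p * c ^ p := by
      have h1 : a ^ (p-2) ≤ (2*c) ^ (p-2) := Real.rpow_le_rpow ha0 ha2c (by linarith)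
      have h2 : |b| ≤ 2*c*c := by
        refine hb.trans ?_
        have := mul_le_mul_of_nonneg_right ha2c hc0
        linarith
      have h3 : a ^ (p-2) * |b| ≤ (2*c) ^ (p-2) * (2*c*c) :=
        mul_le_mul h1 h2 (abs_nonneg b) (Real.rpow_nonneg (by linarith) _)
      refine h3.trans ?_
      have e1 : ((2*c) : ℝ) ^ (p-2) * (2*c*c) = (2*c) ^ (p-2) * (2*c)^(2:ℝ) / 2 := by
        rw [Real.rpow_two]
        ring
      have e2 : ((2*c):ℝ) ^ (p-2) * (2*c)^(2:ℝ) = (2*c) ^ p := by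
        rw [← Real.rpow_add (by linarith : (0:ℝ) < 2*c)]
        congr 1; ring
      rw [e1, e2, Real.mul_rpow (by norm_num) hc0]
      have h4 : (0:ℝ) ≤ 2^p * c^p := by positivity
      linarith
    have hsumle : ‖u+v‖ ^ p + a ^ p + p * a ^ (p-2) * |b| ≤ C * c ^ p := by
      have h5 : p * (a ^ (p-2) * |b|) ≤ p * (2^p * c ^ p) :=
        mul_le_mul_of_nonneg_left hZ hp0.le
      simp only [hCdef]
      have h6 : 0 ≤ p^2 * (3/2:ℝ)^(p-2) * c^p := by positivity
      nlinarith [h5, hX, hY, h6]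
    refine hsumle.trans ?_
    have harcr : 0 ≤ a ^ (p-r) * c ^ r := by positivity
    rw [mul_add]; linarith [mul_nonneg hCpos.le harcr]
end
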